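/- Let p ≥ 2 and let g be a Hahn series over a field K with value group ℚ whose support is contained in the positive rationals. Then the family (φ_p^k(g))_{k ≥ 0} is summable. -/

import Mathlib

/-- Let `p ≥ 2` and let `g` be a Hahn series over a field `K` (value group `ℚ`) whose
support is contained in the positive rationals. Then the family `(φ_p^k g)_{k ≥ 0}` is
summable: the union of the supports is well-ordered and each `γ` lies in the support of
only finitely many members. Here `F k = φ_p^k g` is characterized by
`(F k).coeff γ = g.coeff (γ / p^k)`. -/
theorem summable_family_of_pos_support (p : ℕ) (hp : 2 ≤ p) (K : Type*) [Field K]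
    (g : HahnSeries ℚ K) (hg : g.support ⊆ {γ : ℚ | 0 < γ})
    (F : ℤ → HahnSeries ℚ K)
    (hF : ∀ (k : ℤ) (γ : ℚ), (F k).coeff γ = g.coeff (γ / (p : ℚ) ^ k)) :
    (⋃ k ∈ {k : ℤ | 0 ≤ k}, (F k).support).IsWF ∧
      ∀ γ : ℚ, {k : ℤ | 0 ≤ k ∧ γ ∈ (F k).support}.Finite := by
  have hp2 : (2:ℚ) ≤ (p:ℚ) := by exact_mod_cast hp
  -- self-bound for powers
  have hpow : ∀ k : ℤ, 0 ≤ k → (k : ℚ) < (p:ℚ) ^ k := by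
    intro k hk
    lift k to ℕ using hk
    rw [zpow_natCast]
    calc (k:ℚ) < (2:ℚ)^k := by exact_mod_cast (Nat.lt_two_pow_self (n := k))
    _ ≤ (p:ℚ)^k := by
        apply pow_le_pow_left₀ (by norm_num) hp2
  have hppos : ∀ k : ℤ, (0:ℚ) < (p:ℚ) ^ k := fun k =>
    zpow_pos (by positivity) k
  by_cases hne : g.support.Nonempty
  · set m := g.isWF_support.min hne with hm
    have hmmem : m ∈ g.support := g.isWF_support.min_mem hne
    have hm0 : 0 < m := hg hmmem
    -- key bound
    have key : ∀ (k : ℤ) (γ : ℚ), 0 ≤ k → γ ∈ (F k).support → (k:ℚ) < γ / m := by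
      intro k γ hk hγ
      have h1 : γ / (p:ℚ)^k ∈ g.support := by
        simpa [HahnSeries.mem_support, hF] using hγ
      have h2 : m ≤ γ / (p:ℚ)^k := le_of_not_gt (Set.IsWF.not_lt_min g.isWF_support hne h1)
      have h3 : (p:ℚ)^k ≤ γ / m := by
        rw [le_div_iff₀ hm0]
        calc (p:ℚ)^k * m ≤ (p:ℚ)^k * (γ / (p:ℚ)^k) := by
              exact mul_le_mul_of_nonneg_left h2 (le_of_lt (hppos k))
          _ = γ := by field_simp
      exact lt_of_lt_of_le (hpow k hk) h3
    constructor
    · rw [Set.isWF_iff_no_descending_seq]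
      intro f hf hmem
      have hf0 : ∀ n, f n ∈ ⋃ k ∈ Finset.Icc (0:ℤ) ⌈f 0 / m⌉, (F k).support := by
        intro n
        obtain ⟨_, ⟨k, rfl⟩, _, ⟨hk, rfl⟩, hfk⟩ := hmem n
        have hk' : (0:ℤ) ≤ k := hk
        have hb : (k:ℚ) < f n / m := key k (f n) hk' hfk
        have hfn : f n ≤ f 0 := hf.antitone (Nat.zero_le n)
        have hkc : (k:ℚ) < f 0 / m :=
          lt_of_lt_of_le hb (div_le_div_of_nonneg_right hfn hm0.le)
        have hkN : k ≤ ⌈f 0 / m⌉ := by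
          have : (k:ℚ) < (⌈f 0 / m⌉ : ℚ) := lt_of_lt_of_le hkc (Int.le_ceil _)
          exact_mod_cast this.le
        exact Set.mem_biUnion (Finset.mem_Icc.mpr ⟨hk', hkN⟩) hfk
      have hUwf : (⋃ k ∈ Finset.Icc (0:ℤ) ⌈f 0 / m⌉, (F k).support).IsWF :=
        (Finset.isWF_bUnion _).mpr fun k _ => (F k).isWF_support
      exact (Set.isWF_iff_no_descending_seq.mp hUwf) f hf hf0
    · intro γ
      apply Set.Finite.subset (Set.finite_Icc (0:ℤ) ⌈γ / m⌉)
      rintro k ⟨hk, hγ⟩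
      have hb : (k:ℚ) < γ / m := key k γ hk hγ
      have : (k:ℚ) < (⌈γ / m⌉ : ℚ) := lt_of_lt_of_le hb (Int.le_ceil _)
      exact ⟨hk, le_of_lt (by exact_mod_cast this)⟩
  · -- support empty: g.coeff always 0
    have hz : ∀ γ : ℚ, g.coeff γ = 0 := by
      intro γ
      by_contra h
      exact hne ⟨γ, h⟩
    constructor
    · have : (⋃ k ∈ {k : ℤ | 0 ≤ k}, (F k).support) = ∅ := by
        ext γ; simp [HahnSeries.mem_support, hF, hz]
      rw [this]; exact Set.isWF_empty
    · intro γ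
      have : {k : ℤ | 0 ≤ k ∧ γ ∈ (F k).support} = ∅ := by
        ext k; simp [HahnSeries.mem_support, hF, hz]
      rw [this]; exact Set.finite_empty
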